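/- Let α ≥ 2 be an integer, let p, q be distributions on A = {1,…,k} with q_i > 0 for every i, let n ≥ 1 be an integer, and let N_1,…,N_k be independent Poisson random variables with N_i having mean n·p_i. Then the estimator X = n^{−α}·Σ_{i=1}^k q_i^{1−α}·N_i^{α̲} is unbiased for the divergence power sum: E[X] = M_α(p,q) = Σ_{i=1}^k p_i^α q_i^{1−α}. -/

import Mathlib

open Finset Real

/-- `p` is a probability distribution on `Fin k`. -/
def IsDist {k : ℕ} (p : Fin k → ℝ) : Prop := (∀ i, 0 ≤ p i) ∧ ∑ i, p i = 1

/-- Probability mass function of a Poisson random variable with mean `l`. -/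
noncomputable def poissonPMF (l : ℝ) (j : ℕ) : ℝ :=
  Real.exp (-l) * l ^ j / (Nat.factorial j)

/-- Expectation of `g` under `k` independent Poisson random variables with
means `lam i`. -/
noncomputable def poissonE {k : ℕ} (lam : Fin k → ℝ) (g : (Fin k → ℕ) → ℝ) : ℝ :=
  ∑' ν : Fin k → ℕ, (∏ i, poissonPMF (lam i) (ν i)) * g ν

open scoped ENNReal

lemma poissonPMF_nonneg {l : ℝ} (hl : 0 ≤ l) (j : ℕ) : 0 ≤ poissonPMF l j := by
  unfold poissonPMF
  positivity

lemma hasSum_poissonPMF (l : ℝ) : HasSum (poissonPMF l) 1 := by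
  unfold poissonPMF
  apply (hasSum_mul_left_iff (Real.exp_ne_zero l)).mp
  have h : (fun i ↦ rexp l * (rexp (-l) * l ^ i / (Nat.factorial i : ℝ))) =
      fun i ↦ l ^ i / (Nat.factorial i : ℝ) := by
    ext j
    rw [mul_div_assoc, Real.exp_neg, ← mul_assoc, ← div_eq_mul_inv,
      div_self (Real.exp_ne_zero l), one_mul]
  rw [mul_one, h, Real.exp_eq_exp_ℝ]
  exact NormedSpace.expSeries_div_hasSum_exp l

lemma hasSum_poisson_descFactorial (l : ℝ) (α : ℕ) :
    HasSum (fun j => poissonPMF l j * ((Nat.descFactorial j α : ℝ))) (l ^ α) := by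
  set f : ℕ → ℝ := fun j => poissonPMF l j * (Nat.descFactorial j α : ℝ) with hf
  have h0 : ∀ i ∈ Finset.range α, f i = 0 := by
    intro i hi
    simp [hf, Nat.descFactorial_eq_zero_iff_lt.mpr (Finset.mem_range.mp hi)]
  have key : (fun m => f (m + α)) =
      fun m => (Real.exp (-l) * l ^ α) * (l ^ m / (Nat.factorial m : ℝ)) := by
    ext m
    have hd : ((Nat.factorial m : ℝ)) * ((m + α).descFactorial α : ℝ)
        = ((m + α).factorial : ℝ) := by
      rw [← Nat.cast_mul]
      norm_cast
      have := Nat.factorial_mul_descFactorial (n := m + α) (k := α) (Nat.le_add_left α m)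
      simpa [Nat.add_sub_cancel] using this
    have hm : (Nat.factorial m : ℝ) ≠ 0 := Nat.cast_ne_zero.mpr m.factorial_ne_zero
    have hD : ((m + α).descFactorial α : ℝ) ≠ 0 := by
      rw [Nat.cast_ne_zero]
      intro h
      exact absurd (Nat.descFactorial_eq_zero_iff_lt.mp h) (by omega)
    simp only [hf, poissonPMF]
    rw [← hd, pow_add]
    field_simp
  have h1 : HasSum (fun m => f (m + α)) (Real.exp (-l) * l ^ α * Real.exp l) := by
    rw [key]
    have := (Real.exp_eq_exp_ℝ ▸ NormedSpace.expSeries_div_hasSum_exp l :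
      HasSum (fun m => l ^ m / (Nat.factorial m : ℝ)) (Real.exp l))
    exact this.mul_left _
  have h2 := (hasSum_nat_add_iff' (f := f) α).mp (by
    rwa [Finset.sum_eq_zero h0, sub_zero])
  have : Real.exp (-l) * l ^ α * Real.exp l = l ^ α := by
    rw [mul_comm (Real.exp (-l)) (l ^ α), mul_assoc, ← Real.exp_add]
    simp
  rwa [this] at h2

lemma tsum_pi_prod : ∀ {k : ℕ} (f : Fin k → ℕ → ℝ≥0∞),
    ∑' ν : Fin k → ℕ, ∏ i, f i (ν i) = ∏ i, ∑' j, f i j := by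
  intro k
  induction k with
  | zero =>
    intro f
    simp only [Finset.univ_eq_empty, Finset.prod_empty]
    exact tsum_eq_single (fun i => i.elim0) (fun ν hν => absurd (funext fun i => i.elim0) hν) |>.trans rfl
  | succ k ih =>
    intro f
    rw [← (Fin.consEquiv (fun _ : Fin (k+1) => ℕ)).tsum_eq]
    have h : ∀ x : ℕ × (Fin k → ℕ),
        (∏ i, f i ((Fin.consEquiv (fun _ : Fin (k+1) => ℕ)) x i)) =
        f 0 x.1 * ∏ i : Fin k, f i.succ (x.2 i) := by
      intro x
      rw [Fin.prod_univ_succ]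
      simp [Fin.consEquiv]
    rw [tsum_congr h, ENNReal.tsum_prod']
    have h2 : ∀ a : ℕ, ∑' ν : Fin k → ℕ, f 0 a * ∏ i : Fin k, f i.succ (ν i)
        = f 0 a * ∏ i : Fin k, ∑' j, f i.succ j := by
      intro a
      rw [ENNReal.tsum_mul_left, ih]
    rw [tsum_congr h2, ENNReal.tsum_mul_right, Fin.prod_univ_succ]

/-- the bias-corrected power sum estimator is unbiased under
Poisson sampling. -/
theorem poissonized_estimator_unbiased (α : ℕ) (hα : 2 ≤ α) (k : ℕ)
    (p q : Fin k → ℝ) (hp : IsDist p) (hq : IsDist q) (hqpos : ∀ i, 0 < q i)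
    (n : ℕ) (hn : 1 ≤ n) :
    poissonE (fun i => (n : ℝ) * p i)
        (fun ν => (n : ℝ) ^ (-(α : ℝ)) *
          ∑ i, q i ^ (1 - (α : ℝ)) * ((ν i).descFactorial α : ℝ))
      = ∑ i, p i ^ (α : ℝ) * q i ^ (1 - (α : ℝ)) := by
  classical
  obtain ⟨hp0, hps⟩ := hp
  have hnpos : (0:ℝ) < n := by exact_mod_cast Nat.lt_of_lt_of_le Nat.zero_lt_one hn
  set c : ℝ := (n : ℝ) ^ (-(α : ℝ)) with hc
  have hcpos : 0 < c := Real.rpow_pos_of_pos hnpos _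
  set a : Fin k → ℝ := fun i => q i ^ (1 - (α : ℝ)) with ha
  have hapos : ∀ i, 0 < a i := fun i => Real.rpow_pos_of_pos (hqpos i) _
  set lam : Fin k → ℝ := fun i => (n : ℝ) * p i with hlamdef
  have hlam : ∀ i, 0 ≤ lam i := fun i => mul_nonneg hnpos.le (hp0 i)
  set T : (Fin k → ℕ) → ℝ := fun ν =>
    (∏ i, poissonPMF (lam i) (ν i)) * (c * ∑ i, a i * ((ν i).descFactorial α : ℝ)) with hT
  have hTnonneg : ∀ ν, 0 ≤ T ν := by
    intro ν
    apply mul_nonneg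
    · exact Finset.prod_nonneg fun i _ => poissonPMF_nonneg (hlam i) _
    · exact mul_nonneg hcpos.le (Finset.sum_nonneg fun i _ =>
        mul_nonneg (hapos i).le (Nat.cast_nonneg _))
  set P : Fin k → ℕ → ℝ≥0∞ := fun j m => ENNReal.ofReal (poissonPMF (lam j) m) with hP
  set d : ℕ → ℝ≥0∞ := fun m => (m.descFactorial α : ℝ≥0∞) with hd
  set F : (Fin k → ℕ) → ℝ≥0∞ := fun ν => ENNReal.ofReal (T ν) with hF
  -- rewrite F as a nice ENNReal expression
  have hFeq : ∀ ν, F ν = ENNReal.ofReal c *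
      ∑ i, ENNReal.ofReal (a i) * ((∏ j, P j (ν j)) * d (ν i)) := by
    intro ν
    show ENNReal.ofReal ((∏ i, poissonPMF (lam i) (ν i)) *
      (c * ∑ i, a i * ((ν i).descFactorial α : ℝ))) = _
    rw [ENNReal.ofReal_mul (Finset.prod_nonneg fun i _ => poissonPMF_nonneg (hlam i) _),
        ENNReal.ofReal_mul hcpos.le,
        ENNReal.ofReal_prod_of_nonneg (fun i _ => poissonPMF_nonneg (hlam i) _),
        ENNReal.ofReal_sum_of_nonneg (fun i _ =>
          mul_nonneg (hapos i).le (Nat.cast_nonneg _))]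
    have hterm : ∀ i ∈ Finset.univ, ENNReal.ofReal (a i * ((ν i).descFactorial α : ℝ))
        = ENNReal.ofReal (a i) * d (ν i) := by
      intro i _
      rw [ENNReal.ofReal_mul (hapos i).le, ENNReal.ofReal_natCast]
    rw [Finset.sum_congr rfl hterm, Finset.mul_sum, Finset.mul_sum,
      Finset.mul_sum]
    simp only [hP]
    exact Finset.sum_congr rfl fun i _ => by ring
  -- single coordinate sums
  have hsum1 : ∀ j, ∑' m, P j m = 1 := by
    intro j
    rw [hP]
    simp only
    rw [← ENNReal.ofReal_tsum_of_nonneg (fun m => poissonPMF_nonneg (hlam j) m)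
      (hasSum_poissonPMF (lam j)).summable, (hasSum_poissonPMF (lam j)).tsum_eq,
      ENNReal.ofReal_one]
  have hsumd : ∀ i, ∑' m, P i m * d m = ENNReal.ofReal (lam i ^ α) := by
    intro i
    have heq : ∀ m : ℕ, P i m * d m
        = ENNReal.ofReal (poissonPMF (lam i) m * (Nat.descFactorial m α : ℝ)) := by
      intro m
      rw [ENNReal.ofReal_mul (poissonPMF_nonneg (hlam i) m), ENNReal.ofReal_natCast]
    rw [tsum_congr heq,
      ← ENNReal.ofReal_tsum_of_nonneg
        (fun m => mul_nonneg (poissonPMF_nonneg (hlam i) m) (Nat.cast_nonneg _))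
        (hasSum_poisson_descFactorial (lam i) α).summable,
      (hasSum_poisson_descFactorial (lam i) α).tsum_eq]
  -- factorization of the pi-type sum
  have hfac : ∀ i, ∑' ν : Fin k → ℕ, (∏ j, P j (ν j)) * d (ν i)
      = ENNReal.ofReal (lam i ^ α) := by
    intro i
    have h1 : ∀ ν : Fin k → ℕ, (∏ j, P j (ν j)) * d (ν i)
        = ∏ j, (P j (ν j) * (if j = i then d (ν j) else 1)) := by
      intro ν
      rw [Finset.prod_mul_distrib]
      congr 1
      simp [Finset.prod_ite_eq']
    rw [tsum_congr h1,
      tsum_pi_prod (fun j m => P j m * (if j = i then d m else 1))]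
    have h2 : ∀ j : Fin k, (∑' m, P j m * (if j = i then d m else 1))
        = if j = i then ENNReal.ofReal (lam i ^ α) else 1 := by
      intro j
      by_cases h : j = i
      · subst h
        simp only [if_pos rfl]
        exact hsumd j
      · simp only [if_neg h, mul_one]
        exact hsum1 j
    rw [Finset.prod_congr rfl (fun j _ => h2 j)]
    simp
  -- full ENNReal sum
  have hFsum : ∑' ν, F ν = ENNReal.ofReal (∑ i, p i ^ (α : ℝ) * a i) := by
    rw [tsum_congr hFeq, ENNReal.tsum_mul_left,
      Summable.tsum_finsetSum (fun i _ => ENNReal.summable)]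
    have h3 : ∀ i ∈ Finset.univ, (∑' ν : Fin k → ℕ,
        ENNReal.ofReal (a i) * ((∏ j, P j (ν j)) * d (ν i)))
        = ENNReal.ofReal (a i) * ENNReal.ofReal (lam i ^ α) := by
      intro i _
      rw [ENNReal.tsum_mul_left, hfac i]
    rw [Finset.sum_congr rfl h3]
    have h4 : ∀ i, c * (a i * lam i ^ α) = p i ^ (α : ℝ) * a i := by
      intro i
      have hl : lam i ^ α = (n : ℝ) ^ α * p i ^ α := by
        rw [hlamdef]; exact mul_pow _ _ _
      have hcn : c * (n : ℝ) ^ α = 1 := by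
        rw [hc, ← Real.rpow_natCast (n : ℝ) α, ← Real.rpow_add hnpos]
        simp
      have hpα : p i ^ (α : ℝ) = p i ^ α := Real.rpow_natCast _ _
      rw [hl, hpα]
      calc c * (a i * ((n : ℝ) ^ α * p i ^ α))
          = (c * (n : ℝ) ^ α) * (p i ^ α * a i) := by ring
        _ = p i ^ α * a i := by rw [hcn, one_mul]
    have h5 : ∀ i ∈ Finset.univ, ENNReal.ofReal (a i) * ENNReal.ofReal (lam i ^ α)
        = ENNReal.ofReal (a i * lam i ^ α) :=
      fun i _ => (ENNReal.ofReal_mul (hapos i).le).symm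
    rw [Finset.sum_congr rfl h5,
      ← ENNReal.ofReal_sum_of_nonneg (fun i _ =>
        mul_nonneg (hapos i).le (pow_nonneg (hlam i) α)),
      ← ENNReal.ofReal_mul hcpos.le, Finset.mul_sum]
    congr 1
    exact Finset.sum_congr rfl fun i _ => h4 i
  -- conclude in ℝ
  have hgoal : poissonE lam (fun ν => c *
      ∑ i, a i * ((ν i).descFactorial α : ℝ)) = ∑' ν, T ν := rfl
  calc poissonE lam (fun ν => c * ∑ i, a i * ((ν i).descFactorial α : ℝ))
      = ∑' ν, T ν := rfl
    _ = ∑' ν, (F ν).toReal := by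
        refine tsum_congr fun ν => ?_
        rw [hF, ENNReal.toReal_ofReal (hTnonneg ν)]
    _ = (∑' ν, F ν).toReal := (ENNReal.tsum_toReal_eq (fun ν => ENNReal.ofReal_ne_top)).symm
    _ = ∑ i, p i ^ (α : ℝ) * a i := by
        rw [hFsum, ENNReal.toReal_ofReal]
        exact Finset.sum_nonneg fun i _ =>
          mul_nonneg (Real.rpow_nonneg (hp0 i) _) (hapos i).le
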